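/- For all real x with 0 < |x| < π/2, one has 2 + (17/720)·x³·sin x < x/sin x + ((x/2)/tan(x/2))². -/

import Mathlib

open Real

lemma mono_aux {f f' : ℝ → ℝ} (hd : ∀ y, HasDerivAt f (f' y) y) (h0 : f 0 = 0)
    (hnn : ∀ y, 0 ≤ y → 0 ≤ f' y) {t : ℝ} (ht : 0 ≤ t) : 0 ≤ f t := by
  have hmono : MonotoneOn f (Set.Ici 0) := by
    apply monotoneOn_of_deriv_nonneg (convex_Ici 0)
    · exact fun y _ => (hd y).differentiableAt.continuousAt.continuousWithinAt
    · exact fun y _ => (hd y).differentiableAt.differentiableWithinAt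
    · intro y hy
      rw [interior_Ici] at hy
      rw [(hd y).deriv]
      exact hnn y hy.le
  have := hmono Set.self_mem_Ici ht ht
  linarith [this, h0.ge]

lemma sin_ge_poly {t : ℝ} (ht : 0 ≤ t) : t - t^3/6 ≤ Real.sin t := by
  have h := mono_aux (f := fun y => Real.sin y - (y - y^3/6))
    (f' := fun y => Real.cos y - (1 - y^2/2)) (fun y => by
      have := ((Real.hasDerivAt_sin y).sub ((hasDerivAt_id y).sub
        ((hasDerivAt_pow 3 y).div_const 6)))
      convert this using 1
      all_goals first | rfl | (simp; ring)) (by simp) (fun y _ => by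
        have := Real.one_sub_sq_div_two_le_cos (x := y); linarith) ht
  linarith

lemma cos_le_poly {t : ℝ} (ht : 0 ≤ t) : Real.cos t ≤ 1 - t^2/2 + t^4/24 := by
  have h := mono_aux (f := fun y => (1 - y^2/2 + y^4/24) - Real.cos y)
    (f' := fun y => (Real.sin y - (y - y^3/6))) (fun y => by
      have := (((hasDerivAt_const y (1:ℝ)).sub ((hasDerivAt_pow 2 y).div_const 2)).add
        ((hasDerivAt_pow 4 y).div_const 24)).sub (Real.hasDerivAt_cos y)
      convert this using 1
      all_goals first | rfl | (simp; ring)) (by norm_num) (fun y hy => by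
        have := sin_ge_poly hy; linarith) ht
  linarith

lemma sin_le_poly {t : ℝ} (ht : 0 ≤ t) : Real.sin t ≤ t - t^3/6 + t^5/120 := by
  have h := mono_aux (f := fun y => (y - y^3/6 + y^5/120) - Real.sin y)
    (f' := fun y => ((1 - y^2/2 + y^4/24) - Real.cos y)) (fun y => by
      have := (((hasDerivAt_id y).sub ((hasDerivAt_pow 3 y).div_const 6)).add
        ((hasDerivAt_pow 5 y).div_const 120)).sub (Real.hasDerivAt_sin y)
      convert this using 1
      all_goals first | rfl | (simp; ring)) (by norm_num) (fun y hy => by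
        have := cos_le_poly hy; linarith) ht
  linarith
set_option maxHeartbeats 1000000

lemma Qpos (u : ℝ) (h0 : 0 ≤ u) (h1 : u ≤ 0.618) :
    0 < 47/120 - (2329/7200)*u + (23827/194400)*u^2 - (219127/7776000)*u^3
      + (203117/46656000)*u^4 - (329953/699840000)*u^5 + (2533/69984000)*u^6
      - (17/8748000)*u^7 + (391/5598720000)*u^8 - (17/11197440000)*u^9
      + (17/1119744000000)*u^10 := by
  nlinarith [pow_nonneg h0 2, pow_nonneg h0 3, pow_nonneg h0 4, pow_nonneg h0 5,
    pow_nonneg h0 6, pow_nonneg h0 7, pow_nonneg h0 8, pow_nonneg h0 9, pow_nonneg h0 10,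
    mul_nonneg (pow_nonneg h0 4) (sub_nonneg.2 h1), mul_nonneg (pow_nonneg h0 6) (sub_nonneg.2 h1),
    mul_nonneg (pow_nonneg h0 8) (sub_nonneg.2 h1), mul_nonneg (pow_nonneg h0 2) (sub_nonneg.2 h1),
    mul_nonneg h0 (sub_nonneg.2 h1)]

lemma key2 (t : ℝ) (ht0 : 0 < t) (ht1 : t ≤ 0.786) :
    (17/45)*t^3*((t - t^3/6 + t^5/120)^3 - (t - t^3/6 + t^5/120)^5)
      + (1 - t^2/2 + t^4/24) * ((t^2+2)*(t - t^3/6 + t^5/120)^2 - t^2)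
      < t*(t - t^3/6 + t^5/120) := by
  have hu1 : t^2 ≤ 0.618 := by nlinarith
  have hQ := Qpos (t^2) (sq_nonneg t) hu1
  have h8 : (0:ℝ) < t^8 := pow_pos ht0 8
  nlinarith [mul_pos h8 hQ]

lemma Bnn (t s : ℝ) (ht0 : 0 < t) (ht1 : t ≤ 0.786)
    (hs1 : t - t^3/6 ≤ s) (hs2 : s ≤ t - t^3/6 + t^5/120) :
    0 ≤ -t + (1 - t^2/2 + t^4/24)*(t^2+2)*(s + (t - t^3/6 + t^5/120))
      + (17/45)*t^3*(s^2 + s*(t - t^3/6 + t^5/120) + (t - t^3/6 + t^5/120)^2)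
      - (17/45)*t^3*(s^4 + s^3*(t - t^3/6 + t^5/120) + s^2*(t - t^3/6 + t^5/120)^2
          + s*(t - t^3/6 + t^5/120)^3 + (t - t^3/6 + t^5/120)^4) := by
  have hu : t^2 ≤ 0.618 := by nlinarith
  have ht2 : t^2 < 6 := by nlinarith
  have hs0 : 0 < s := by nlinarith [mul_lt_mul_of_pos_left ht2 ht0]
  have hsu0 : 0 < t - t^3/6 + t^5/120 := by nlinarith [pow_pos ht0 5]
  have hsut : t - t^3/6 + t^5/120 ≤ t := by
    nlinarith [mul_le_mul_of_nonneg_left hu (pow_pos ht0 3).le]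
  have hst : s ≤ t := le_trans hs2 hsut
  have ha : (0:ℝ) ≤ 1 - t^2/2 := by nlinarith
  have hterm2 : (1 - t^2/2)*2*(2*t - t^3/3)
      ≤ (1 - t^2/2 + t^4/24)*(t^2+2)*(s + (t - t^3/6 + t^5/120)) := by
    have h1 : (1 - t^2/2)*2 ≤ (1 - t^2/2 + t^4/24)*(t^2+2) := by nlinarith [sq_nonneg t, sq_nonneg (t^2)]
    have h2 : 2*t - t^3/3 ≤ s + (t - t^3/6 + t^5/120) := by nlinarith [pow_pos ht0 5]
    have h3 : (0:ℝ) ≤ 2*t - t^3/3 := by nlinarith [mul_lt_mul_of_pos_left ht2 ht0]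
    have h4 : (0:ℝ) ≤ (1 - t^2/2)*2 := by linarith
    exact mul_le_mul h1 h2 h3 (by nlinarith [sq_nonneg t, sq_nonneg (t^2)])
  have hterm3 : (0:ℝ) ≤ (17/45)*t^3*(s^2 + s*(t - t^3/6 + t^5/120) + (t - t^3/6 + t^5/120)^2) := by
    have := mul_nonneg hs0.le hsu0.le
    nlinarith [pow_pos ht0 3, sq_nonneg s, sq_nonneg (t - t^3/6 + t^5/120)]
  have hterm4 : (17/45)*t^3*(s^4 + s^3*(t - t^3/6 + t^5/120) + s^2*(t - t^3/6 + t^5/120)^2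
        + s*(t - t^3/6 + t^5/120)^3 + (t - t^3/6 + t^5/120)^4) ≤ (17/45)*t^3*(5*t^4) := by
    have e1 : s^4 ≤ t^4 := pow_le_pow_left₀ hs0.le hst 4
    have e2 : s^3*(t - t^3/6 + t^5/120) ≤ t^3*t :=
      mul_le_mul (pow_le_pow_left₀ hs0.le hst 3) hsut hsu0.le (by positivity)
    have e3 : s^2*(t - t^3/6 + t^5/120)^2 ≤ t^2*t^2 :=
      mul_le_mul (pow_le_pow_left₀ hs0.le hst 2) (pow_le_pow_left₀ hsu0.le hsut 2)
        (by positivity) (by positivity)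
    have e4 : s*(t - t^3/6 + t^5/120)^3 ≤ t*t^3 :=
      mul_le_mul hst (pow_le_pow_left₀ hsu0.le hsut 3) (by positivity) ht0.le
    have e5 : (t - t^3/6 + t^5/120)^4 ≤ t^4 := pow_le_pow_left₀ hsu0.le hsut 4
    have h3 : (0:ℝ) ≤ (17/45)*t^3 := by positivity
    have hsum : s^4 + s^3*(t - t^3/6 + t^5/120)
      + s^2*(t - t^3/6 + t^5/120)^2 + s*(t - t^3/6 + t^5/120)^3
      + (t - t^3/6 + t^5/120)^4 ≤ 5*t^4 := by linarith
    exact mul_le_mul_of_nonneg_left hsum h3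
  have hfinal : (0:ℝ) ≤ -t + (1 - t^2/2)*2*(2*t - t^3/3) - (17/45)*t^3*(5*t^4) := by
    nlinarith [mul_nonneg ht0.le (sub_nonneg.2 hu),
      mul_nonneg (mul_nonneg ht0.le (sub_nonneg.2 hu)) (sq_nonneg t),
      mul_nonneg (mul_nonneg (mul_nonneg ht0.le (sub_nonneg.2 hu)) (sq_nonneg t)) (sq_nonneg t),
      pow_pos ht0 5, pow_pos ht0 7]
  linarith

lemma key (t s c : ℝ) (ht0 : 0 < t) (ht1 : t ≤ 0.786)
    (hs1 : t - t^3/6 ≤ s) (hs2 : s ≤ t - t^3/6 + t^5/120)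
    (hc1 : c ≤ 1 - t^2/2 + t^4/24) (hc0 : 0 < c) (hpy : s^2 + c^2 = 1) :
    2*s^2*c + (17/45)*t^3*s^3*c^2 < t*s + t^2*c^3 := by
  have hu : t^2 ≤ 0.618 := by nlinarith
  have ht2 : t^2 < 6 := by nlinarith
  have hs0 : 0 < s := by nlinarith [mul_lt_mul_of_pos_left ht2 ht0]
  have hA : 0 ≤ (t^2+2)*s^2 - t^2 := by
    nlinarith [mul_nonneg (sub_nonneg.2 hs1) (show (0:ℝ) ≤ s + (t - t^3/6) by
      nlinarith [mul_lt_mul_of_pos_left ht2 ht0]),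
      mul_nonneg (mul_nonneg ht0.le ht0.le) (sub_nonneg.2 hu),
      mul_nonneg (mul_nonneg (mul_nonneg (mul_nonneg ht0.le ht0.le) ht0.le) ht0.le) (sub_nonneg.2 hu)]
  have hcA : c * ((t^2+2)*s^2 - t^2) ≤ (1 - t^2/2 + t^4/24) * ((t^2+2)*s^2 - t^2) :=
    mul_le_mul_of_nonneg_right hc1 hA
  have hB := mul_nonneg (sub_nonneg.2 hs2) (Bnn t s ht0 ht1 hs1 hs2)
  have h2 := key2 t ht0 ht1
  have e : t*s + t^2*c^3 - (2*s^2*c + (17/45)*t^3*s^3*c^2)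
      = t*s - c*((t^2+2)*s^2 - t^2) - (17/45)*t^3*(s^3 - s^5) := by
    linear_combination (t^2*c - (17/45)*t^3*s^3) * hpy
  nlinarith [hcA, hB, h2, e]

theorem wilker_pos (x : ℝ) (hx0 : 0 < x) (h2 : x < π / 2) :
    2 + (17 / 720) * x ^ 3 * Real.sin x <
      x / Real.sin x + ((x / 2) / Real.tan (x / 2)) ^ 2 := by
  have hpi := Real.pi_lt_d6
  have ht0 : 0 < x / 2 := by linarith
  have ht1 : x / 2 ≤ 0.786 := by norm_num; linarith
  have hs : 0 < Real.sin (x / 2) :=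
    Real.sin_pos_of_pos_of_lt_pi ht0 (by nlinarith [Real.pi_pos])
  have hc : 0 < Real.cos (x / 2) :=
    Real.cos_pos_of_mem_Ioo ⟨by nlinarith [Real.pi_pos], by linarith⟩
  have hkey := key (x/2) (Real.sin (x/2)) (Real.cos (x/2)) ht0 ht1
    (sin_ge_poly ht0.le) (sin_le_poly ht0.le) (cos_le_poly ht0.le) hc
    (Real.sin_sq_add_cos_sq (x/2))
  have hsx : Real.sin x = 2 * Real.sin (x/2) * Real.cos (x/2) := by
    rw [← Real.sin_two_mul]
    ring_nf
  have e1 : x / Real.sin x = (x/2) / (Real.sin (x/2) * Real.cos (x/2)) := by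
    rw [hsx]; ring
  have e2 : ((x/2) / Real.tan (x/2))^2
      = ((x/2)^2 * Real.cos (x/2)^2) / (Real.sin (x/2)^2) := by
    rw [Real.tan_eq_sin_div_cos]
    field_simp
  rw [e1, e2, hsx, div_add_div _ _ (by positivity) (by positivity),
    lt_div_iff₀ (by positivity)]
  nlinarith [mul_lt_mul_of_pos_right hkey hs]

theorem wilker_lower (x : ℝ) (h1 : 0 < |x|) (h2 : |x| < π / 2) :
    2 + (17 / 720) * x ^ 3 * Real.sin x <
      x / Real.sin x + ((x / 2) / Real.tan (x / 2)) ^ 2 := by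
  rcases abs_pos.1 h1 |>.lt_or_gt with hx | hx
  · have h := wilker_pos (-x) (by linarith) (by rwa [abs_of_neg hx] at h2)
    rw [show -x/2 = -(x/2) by ring, Real.sin_neg, Real.tan_neg] at h
    calc 2 + (17/720) * x^3 * Real.sin x
        = 2 + (17/720) * (-x)^3 * (-Real.sin x) := by ring
      _ < -x / -Real.sin x + (-(x/2) / -Real.tan (x/2))^2 := h
      _ = x / Real.sin x + ((x/2) / Real.tan (x/2))^2 := by
          rw [neg_div_neg_eq, neg_div_neg_eq]
  · exact wilker_pos x hx (by rwa [abs_of_pos hx] at h2)
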